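/- arXiv:2510.14236 — 3 statements merged into one kernel-verified Lean document; each statement's English description precedes it below -/
import Mathlib

section
/- Under the hypotheses of the nested convex minimization proposition, the limit u_∞ of the minimum-norm elements u_n of the nested closed convex sets V_n is itself the unique minimum-norm element of the intersection ⋂_n V_n. -/
/-- The limit of the minimum-norm elements of nested closed convex sets is the
unique minimum-norm element of the intersection. -/
theorem nested_convex_minNorm_limit_is_minNorm_of_inter
    {H : Type*} [NormedAddCommGroup H] [InnerProductSpace ℝ H] [CompleteSpace H]
    (V : ℕ → Set H)
    (hne : ∀ n, (V n).Nonempty)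
    (hclosed : ∀ n, IsClosed (V n))
    (hconv : ∀ n, Convex ℝ (V n))
    (hnested : ∀ n, V (n + 1) ⊆ V n)
    (u : ℕ → H)
    (hmem : ∀ n, u n ∈ V n)
    (hmin : ∀ n, ∀ v ∈ V n, ‖u n‖ ≤ ‖v‖)
    (B : ℝ) (hB : ∀ n, ‖u n‖ ≤ B)
    (uLim : H)
    (hlim : Filter.Tendsto u Filter.atTop (nhds uLim)) :
    uLim ∈ ⋂ n, V n ∧ (∀ v ∈ ⋂ n, V n, ‖uLim‖ ≤ ‖v‖) ∧
      (∀ w ∈ ⋂ n, V n, (∀ v ∈ ⋂ n, V n, ‖w‖ ≤ ‖v‖) → w = uLim) := by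
  have hanti : Antitone V := antitone_nat_of_succ_le hnested
  have hmemInter : uLim ∈ ⋂ n, V n := by
    refine Set.mem_iInter.2 fun n => ?_
    refine (hclosed n).mem_of_tendsto hlim ?_
    filter_upwards [Filter.eventually_ge_atTop n] with m hm
    exact hanti hm (hmem m)
  have hlimnorm : Filter.Tendsto (fun n => ‖u n‖) Filter.atTop (nhds ‖uLim‖) :=
    hlim.norm
  have hminLim : ∀ v ∈ ⋂ n, V n, ‖uLim‖ ≤ ‖v‖ := by
    intro v hv
    refine le_of_tendsto hlimnorm (Filter.Eventually.of_forall fun n => ?_)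
    exact hmin n v (Set.mem_iInter.1 hv n)
  refine ⟨hmemInter, hminLim, ?_⟩
  intro w hw hwmin
  have heq : ‖w‖ = ‖uLim‖ := le_antisymm (hwmin uLim hmemInter) (hminLim w hw)
  have hmid : (1/2 : ℝ) • w + (1/2 : ℝ) • uLim ∈ ⋂ n, V n := by
    refine Set.mem_iInter.2 fun n => ?_
    exact (hconv n) (Set.mem_iInter.1 hw n) (Set.mem_iInter.1 hmemInter n)
      (by norm_num) (by norm_num) (by norm_num)
  have hmidnorm : ‖w‖ ≤ ‖(1/2 : ℝ) • w + (1/2 : ℝ) • uLim‖ := hwmin _ hmid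
  have hpar : ‖w + uLim‖ ^ 2 + ‖w - uLim‖ ^ 2 = 2 * (‖w‖ ^ 2 + ‖uLim‖ ^ 2) := by
    have := parallelogram_law_with_norm ℝ w uLim
    nlinarith [this]
  have hsum : (2 : ℝ) * ‖w‖ ≤ ‖w + uLim‖ := by
    have : (1/2 : ℝ) • w + (1/2 : ℝ) • uLim = (1/2 : ℝ) • (w + uLim) := by
      rw [smul_add]
    rw [this, norm_smul] at hmidnorm
    simp at hmidnorm
    linarith
  have hzero : ‖w - uLim‖ ^ 2 ≤ 0 := by
    nlinarith [norm_nonneg w, norm_nonneg (w + uLim), norm_nonneg (w - uLim)]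
  have : w - uLim = 0 := by
    have := norm_nonneg (w - uLim)
    have hn : ‖w - uLim‖ = 0 := by nlinarith
    exact norm_eq_zero.1 hn
  exact sub_eq_zero.mp this
end

section
/- Let V₁ ⊇ V₂ be nonempty closed convex subsets of a Hilbert space H with minimum-norm elements u₁, u₂, and suppose ‖u₁‖ ≤ B and ‖u₂‖ ≤ B. Then ‖u₂ − u₁‖² ≤ 2B(‖u₂‖ − ‖u₁‖). -/
open scoped RealInnerProductSpace


set_option maxHeartbeats 1000000 in
/-- For minimum-norm elements u₁, u₂ of nested closed convex sets V₂ ⊆ V₁ in a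
Hilbert space, with both norms bounded by B: ‖u₂ - u₁‖² ≤ 2B(‖u₂‖ - ‖u₁‖). -/
theorem minNorm_diff_sq_le_two_B
    {𝕜 H : Type*} [RCLike 𝕜] [NormedAddCommGroup H] [InnerProductSpace 𝕜 H]
    [NormedSpace ℝ H] [IsScalarTower ℝ 𝕜 H]
    (V₁ V₂ : Set H)
    (hsub : V₂ ⊆ V₁)
    (hne₁ : V₁.Nonempty) (hne₂ : V₂.Nonempty)
    (hclosed₁ : IsClosed V₁) (hclosed₂ : IsClosed V₂)
    (hconv₁ : Convex ℝ V₁) (hconv₂ : Convex ℝ V₂)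
    (u₁ u₂ : H)
    (hmem₁ : u₁ ∈ V₁) (hmin₁ : ∀ v ∈ V₁, ‖u₁‖ ≤ ‖v‖)
    (hmem₂ : u₂ ∈ V₂) (hmin₂ : ∀ v ∈ V₂, ‖u₂‖ ≤ ‖v‖)
    (B : ℝ) (hB₁ : ‖u₁‖ ≤ B) (hB₂ : ‖u₂‖ ≤ B) :
    ‖u₂ - u₁‖ ^ 2 ≤ 2 * B * (‖u₂‖ - ‖u₁‖) := by
  letI : Inner ℝ H := Inner.rclikeToReal 𝕜 H
  letI : InnerProductSpace ℝ H :=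
    { norm_sq_eq_re_inner := fun x => norm_sq_eq_re_inner (𝕜 := 𝕜) x
      conj_inner_symm := fun x y => by
        change RCLike.re (inner 𝕜 y x) = RCLike.re (inner 𝕜 x y)
        exact inner_re_symm y x
      add_left := fun x y z => by
        change RCLike.re (inner 𝕜 (x + y) z) = RCLike.re (inner 𝕜 x z) + RCLike.re (inner 𝕜 y z)
        simp only [inner_add_left, map_add]
      smul_left := fun x y r => by
        change RCLike.re (inner 𝕜 (r • x) y) = r * RCLike.re (inner 𝕜 x y)
        rw [← algebraMap_smul 𝕜 r x, RCLike.algebraMap_eq_ofReal, inner_smul_left,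
          RCLike.conj_ofReal, RCLike.re_ofReal_mul] }
  have hne : Nonempty V₁ := ⟨⟨u₁, hmem₁⟩⟩
  -- u₁ realizes the infimum of ‖0 - w‖ over V₁
  have hinf : ‖(0 : H) - u₁‖ = ⨅ w : V₁, ‖(0 : H) - w‖ := by
    apply le_antisymm
    · apply le_ciInf
      intro w
      simpa using hmin₁ w w.2
    · have hbdd : BddBelow (Set.range fun w : V₁ => ‖(0 : H) - (w : H)‖) :=
        ⟨0, by rintro _ ⟨w, rfl⟩; exact norm_nonneg _⟩
      exact ciInf_le hbdd ⟨u₁, hmem₁⟩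
  have hchar := (norm_eq_iInf_iff_real_inner_le_zero hconv₁ hmem₁).mp hinf
  have hkey : ⟪(0 : H) - u₁, u₂ - u₁⟫ ≤ 0 := hchar u₂ (hsub hmem₂)
  have hip : 0 ≤ ⟪u₁, u₂ - u₁⟫ := by
    rw [zero_sub, inner_neg_left] at hkey; linarith
  have hexp : ‖u₂ - u₁‖ ^ 2 = ‖u₂‖ ^ 2 - ‖u₁‖ ^ 2 - 2 * ⟪u₁, u₂ - u₁⟫ := by
    have h1 : ‖u₂ - u₁‖ ^ 2 = ‖u₂‖ ^ 2 - 2 * ⟪u₂, u₁⟫ + ‖u₁‖ ^ 2 := by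
      rw [norm_sub_sq_real]
    have h2 : ⟪u₁, u₂ - u₁⟫ = ⟪u₂, u₁⟫ - ‖u₁‖ ^ 2 := by
      rw [inner_sub_right, real_inner_self_eq_norm_sq, real_inner_comm]
    rw [h1, h2]; ring
  have hle : ‖u₂ - u₁‖ ^ 2 ≤ ‖u₂‖ ^ 2 - ‖u₁‖ ^ 2 := by rw [hexp]; linarith
  have hfac : ‖u₂‖ ^ 2 - ‖u₁‖ ^ 2 = (‖u₂‖ + ‖u₁‖) * (‖u₂‖ - ‖u₁‖) := by ring
  have hmono : ‖u₁‖ ≤ ‖u₂‖ := hmin₁ u₂ (hsub hmem₂)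
  calc ‖u₂ - u₁‖ ^ 2 ≤ (‖u₂‖ + ‖u₁‖) * (‖u₂‖ - ‖u₁‖) := by rw [← hfac]; exact hle
    _ ≤ 2 * B * (‖u₂‖ - ‖u₁‖) := by
        apply mul_le_mul_of_nonneg_right (by linarith) (by linarith)
end

section
/- For x₀ ∈ ℝ² with ‖x₀‖ ≤ 1, −(1/2π) ∫_{D} ln ‖x − x₀‖ dx = 1/4 − ‖x₀‖²/4, where D is the closed unit disk; and for ‖x₀‖ > 1, −(1/2π) ∫_{D} ln ‖x − x₀‖ dx = −(1/2) ln ‖x₀‖. -/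
open MeasureTheory Real Set Metric intervalIntegral
open scoped ENNReal NNReal



lemma mem_slit {z : ℂ} (hz : ‖z‖ < 1) : (1 - z) ∈ Complex.slitPlane := by
  rw [Complex.mem_slitPlane_iff]
  left
  have := Complex.abs_re_le_norm z
  simp only [Complex.sub_re, Complex.one_re]
  have : z.re ≤ ‖z‖ := Complex.re_le_norm z
  linarith

lemma circle_mv {R : ℝ} (hR : 0 < R) {h : ℂ → ℂ}
    (hd : ∀ w ∈ closedBall (0:ℂ) R, DifferentiableAt ℂ h w) :
    ∫ θ in (0:ℝ)..(2*π), h (circleMap 0 R θ) = (2*π : ℝ) • h 0 := by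
  have hdc : DiffContOnCl ℂ h (ball (0:ℂ) R) := by
    apply DifferentiableOn.diffContOnCl
    rw [closure_ball _ hR.ne']
    exact fun w hw => (hd w hw).differentiableWithinAt
  have hmv := hdc.circleIntegral_sub_inv_smul (mem_ball_self hR)
  rw [circleIntegral] at hmv
  simp only [sub_zero, deriv_circleMap, smul_eq_mul] at hmv
  have : ∀ θ : ℝ, circleMap 0 R θ * Complex.I * ((circleMap 0 R θ)⁻¹ * h (circleMap 0 R θ))
      = Complex.I * h (circleMap 0 R θ) := by
    intro θ
    have hne : circleMap 0 R θ ≠ 0 := by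
      simpa using circleMap_ne_center (R := R) hR.ne' (θ := θ) (c := (0:ℂ))
    field_simp
  simp only [this] at hmv
  rw [intervalIntegral.integral_const_mul] at hmv
  have hI : (Complex.I : ℂ) ≠ 0 := Complex.I_ne_zero
  have : Complex.I * ∫ θ in (0:ℝ)..(2*π), h (circleMap 0 R θ)
      = Complex.I * ((2*π:ℝ) • h 0) := by
    rw [hmv, Complex.real_smul]; push_cast; ring
  exact mul_left_cancel₀ hI this

lemma circle_mv_re {R : ℝ} (hR : 0 < R) {h : ℂ → ℂ}
    (hd : ∀ w ∈ closedBall (0:ℂ) R, DifferentiableAt ℂ h w) :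
    ∫ θ in (0:ℝ)..(2*π), (h (circleMap 0 R θ)).re = 2*π * (h 0).re := by
  have hmem : ∀ θ : ℝ, circleMap 0 R θ ∈ closedBall (0:ℂ) R := by
    intro θ
    simp [Complex.dist_eq, abs_of_pos hR, circleMap]
  have hcont : Continuous fun θ : ℝ => h (circleMap 0 R θ) :=
    continuous_iff_continuousAt.2 fun θ =>
      ((hd _ (hmem θ)).continuousAt).comp (continuous_circleMap 0 R).continuousAt
  have h1 := circle_mv hR hd
  have h2 := Complex.reCLM.intervalIntegral_comp_comm
    ((hcont.intervalIntegrable (0:ℝ) (2*π)) : IntervalIntegrable _ volume _ _)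
  simp only [Complex.reCLM_apply] at h2
  rw [h2, h1]
  simp [Complex.real_smul]

lemma circle_log {s : ℝ} (hs : 0 < s) {a : ℂ} (hne : s ≠ ‖a‖) :
    ∫ θ in (0:ℝ)..(2*π), Real.log (‖circleMap 0 s θ - a‖)
      = 2*π * Real.log (max s (‖a‖)) := by
  have hcne : ∀ θ : ℝ, circleMap 0 s θ - a ≠ 0 := by
    intro θ hc
    apply hne
    rw [show a = circleMap 0 s θ from by linear_combination -hc]
    simp [abs_of_pos hs]
  have hu : Continuous fun θ : ℝ => Real.log (‖circleMap 0 s θ - a‖) := by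
    exact (continuous_norm.comp
        ((continuous_circleMap 0 s).sub continuous_const)).log
      (fun θ => norm_ne_zero_iff.mpr (hcne θ))
  rcases lt_or_gt_of_ne hne with hlt | hgt
  · -- s < |a| : point outside the circle
    have ha : a ≠ 0 := by
      intro h; rw [h] at hlt; simp at hlt; linarith
    set h : ℂ → ℂ := fun w => Complex.log (1 - w / a) with hh
    have hd : ∀ w ∈ closedBall (0:ℂ) s, DifferentiableAt ℂ h w := by
      intro w hw
      have habs : ‖w / a‖ < 1 := by
        rw [norm_div, div_lt_one (norm_pos_iff.mpr ha)]
        calc ‖w‖ ≤ s := by simpa [Complex.dist_eq] using hw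
        _ < ‖a‖ := hlt
      exact (Complex.differentiableAt_log (mem_slit habs)).comp w
        ((differentiableAt_id.div_const a).const_sub 1)
    have h1 := circle_mv_re hs hd
    have h0 : h 0 = 0 := by simp [hh]
    rw [h0] at h1
    simp only [Complex.zero_re, mul_zero] at h1
    have hre : ∀ θ : ℝ, (h (circleMap 0 s θ)).re
        = Real.log (‖circleMap 0 s θ - a‖) - Real.log (‖a‖) := by
      intro θ
      have e1 : (1 : ℂ) - circleMap 0 s θ / a = -(circleMap 0 s θ - a) / a := by
        field_simp
        ring
      rw [hh]
      simp only [e1, Complex.log_re, norm_div, norm_neg]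
      rw [Real.log_div (norm_ne_zero_iff.mpr (hcne θ)) (norm_ne_zero_iff.mpr ha)]
    rw [intervalIntegral.integral_congr (g := fun θ =>
        Real.log (‖circleMap 0 s θ - a‖) - Real.log (‖a‖))
        (fun θ _ => hre θ)] at h1
    rw [intervalIntegral.integral_sub (hu.intervalIntegrable _ _)
        (intervalIntegrable_const)] at h1
    rw [intervalIntegral.integral_const, smul_eq_mul] at h1
    rw [max_eq_right hlt.le]
    linarith [h1]
  · -- |a| < s : point inside the circle
    set b : ℂ := (starRingEnd ℂ) a / s with hb
    have hsne : (s : ℂ) ≠ 0 := by exact_mod_cast hs.ne'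
    have hbabs : ‖b‖ < 1 := by
      rw [hb, norm_div]
      simp only [Complex.norm_conj, Complex.norm_real, Real.norm_eq_abs, abs_of_pos hs]
      rw [div_lt_one hs]
      exact hgt
    set h : ℂ → ℂ := fun w => Complex.log (1 - b * w) with hh
    have hd : ∀ w ∈ closedBall (0:ℂ) 1, DifferentiableAt ℂ h w := by
      intro w hw
      have habs : ‖b * w‖ < 1 := by
        rw [norm_mul]
        have hw1 : ‖w‖ ≤ 1 := by simpa [Complex.dist_eq] using hw
        calc ‖b‖ * ‖w‖ ≤ ‖b‖ * 1 :=
              mul_le_mul_of_nonneg_left hw1 (norm_nonneg b)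
        _ = ‖b‖ := mul_one _
        _ < 1 := hbabs
      exact (Complex.differentiableAt_log (mem_slit habs)).comp w
        ((differentiableAt_id.const_mul b).const_sub 1)
    have h1 := circle_mv_re one_pos hd
    have h0 : h 0 = 0 := by simp [hh]
    rw [h0] at h1
    simp only [Complex.zero_re, mul_zero] at h1
    have key : ∀ θ : ℝ, ‖circleMap 0 s θ - a‖
        = s * ‖1 - b * circleMap 0 1 θ‖ := by
      intro θ
      have hexp : ‖Complex.exp (θ * Complex.I)‖ = 1 := by
        simp [Complex.norm_exp]
      have hee : Complex.exp (θ * Complex.I) * Complex.exp (-(θ * Complex.I)) = 1 := by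
        rw [← Complex.exp_add]; simp
      have e1 : circleMap 0 s θ - a
          = Complex.exp (θ * Complex.I) *
            ((s : ℂ) - a * Complex.exp (-(θ * Complex.I))) := by
        simp only [circleMap, zero_add]
        linear_combination a * hee
      rw [e1, norm_mul, hexp, one_mul]
      have e2 : ‖(s : ℂ) - a * Complex.exp (-(θ * Complex.I))‖
          = ‖(s : ℂ) - (starRingEnd ℂ) a * Complex.exp (θ * Complex.I)‖ := by
        rw [← Complex.norm_conj]
        congr 1
        simp only [map_sub, map_mul, Complex.conj_ofReal]
        congr 1
        rw [← Complex.exp_conj]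
        congr 1
        simp [Complex.conj_ofReal]
      rw [e2]
      have e3 : (s : ℂ) - (starRingEnd ℂ) a * Complex.exp (θ * Complex.I)
          = (s : ℂ) * (1 - b * circleMap 0 1 θ) := by
        rw [hb]
        simp only [circleMap, zero_add, Complex.ofReal_one, one_mul]
        field_simp
      rw [e3, norm_mul, Complex.norm_real, Real.norm_eq_abs, abs_of_pos hs]
    have hre : ∀ θ : ℝ, (h (circleMap 0 1 θ)).re
        = Real.log (‖circleMap 0 s θ - a‖) - Real.log s := by
      intro θ
      have habs : ‖1 - b * circleMap 0 1 θ‖ ≠ 0 := by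
        intro hz
        exact (norm_ne_zero_iff.mpr (hcne θ)) (by rw [key θ, hz, mul_zero])
      rw [hh]
      simp only [Complex.log_re]
      rw [key θ, Real.log_mul hs.ne' habs]
      ring
    rw [intervalIntegral.integral_congr (g := fun θ =>
        Real.log (‖circleMap 0 s θ - a‖) - Real.log s)
        (fun θ _ => hre θ)] at h1
    rw [intervalIntegral.integral_sub (hu.intervalIntegrable _ _)
        (intervalIntegrable_const)] at h1
    rw [intervalIntegral.integral_const, smul_eq_mul] at h1
    rw [max_eq_left hgt.le]
    linarith [h1]

lemma integrableOn_log_abs (a : ℂ) :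
    IntegrableOn (fun z : ℂ => Real.log (‖z - a‖)) (closedBall 0 1) volume := by
  set M : ℝ := ‖a‖ + 2 with hM
  have hM1 : 1 ≤ M := by have := norm_nonneg a; rw [hM]; linarith
  have hmeas : Measurable fun z : ℂ => Real.log (‖z - a‖) :=
    Real.measurable_log.comp
      (continuous_norm.comp (continuous_id.sub continuous_const)).measurable
  constructor
  · exact hmeas.aestronglyMeasurable
  · rw [HasFiniteIntegral]
    have hbound : ∀ z : ℂ, z ∈ closedBall (0:ℂ) 1 →
        (‖Real.log (‖z - a‖)‖₊ : ℝ≥0∞)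
          ≤ ENNReal.ofReal (max (-Real.log (‖z - a‖)) 0)
            + ENNReal.ofReal (2 * Real.log M) := by
      intro z hz
      rw [← enorm_eq_nnnorm, Real.enorm_eq_ofReal_abs]
      have habsle : ‖z - a‖ ≤ M := by
        calc ‖z - a‖ ≤ ‖z‖ + ‖a‖ := by
              simpa [sub_eq_add_neg] using norm_add_le z (-a)
        _ ≤ M := by
          have : ‖z‖ ≤ 1 := by simpa [Complex.dist_eq] using hz
          rw [hM]; linarith
      set t := ‖z - a‖ with ht
      have htn : 0 ≤ t := norm_nonneg _
      have habs : |Real.log t| ≤ max (-Real.log t) 0 + 2 * Real.log M := by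
        have hlogM : 0 ≤ Real.log M := Real.log_nonneg hM1
        rcases le_or_gt t 1 with h1 | h1
        · rcases eq_or_lt_of_le htn with h0 | h0
          · rw [← h0]; simp [Real.log_zero]; positivity
          · have : Real.log t ≤ 0 := Real.log_nonpos htn h1
            rw [abs_of_nonpos this]
            have := le_max_left (-Real.log t) 0
            linarith
        · have hlt : 0 ≤ Real.log t := Real.log_nonneg h1.le
          rw [abs_of_nonneg hlt]
          have : Real.log t ≤ Real.log M := Real.log_le_log (by linarith) habsle
          have := le_max_right (-Real.log t) 0
          linarith
      calc ENNReal.ofReal |Real.log t|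
          ≤ ENNReal.ofReal (max (-Real.log t) 0 + 2 * Real.log M) :=
            ENNReal.ofReal_le_ofReal habs
        _ ≤ _ := ENNReal.ofReal_add_le
    calc ∫⁻ z in closedBall (0:ℂ) 1, ‖Real.log (‖z - a‖)‖₊
        ≤ ∫⁻ z in closedBall (0:ℂ) 1,
            (ENNReal.ofReal (max (-Real.log (‖z - a‖)) 0)
              + ENNReal.ofReal (2 * Real.log M)) := by
          apply setLIntegral_mono' measurableSet_closedBall hbound
      _ = (∫⁻ z in closedBall (0:ℂ) 1,
            ENNReal.ofReal (max (-Real.log (‖z - a‖)) 0))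
          + ∫⁻ _z in closedBall (0:ℂ) 1, ENNReal.ofReal (2 * Real.log M) := by
          rw [lintegral_add_right]
          exact measurable_const
      _ < ⊤ := by
        apply ENNReal.add_lt_top.2
        constructor
        · -- layer cake
          have hf_nn : 0 ≤ᵐ[volume.restrict (closedBall (0:ℂ) 1)]
              fun z => max (-Real.log (‖z - a‖)) 0 :=
            Filter.Eventually.of_forall fun z => le_max_right _ _
          have hf_mble : AEMeasurable
              (fun z => max (-Real.log (‖z - a‖)) 0)
              (volume.restrict (closedBall (0:ℂ) 1)) :=
            (hmeas.neg.max measurable_const).aemeasurable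
          rw [lintegral_eq_lintegral_meas_lt _ hf_nn hf_mble]
          have hsub : ∀ t : ℝ, t ∈ Ioi (0:ℝ) →
              (volume.restrict (closedBall (0:ℂ) 1))
                  {z : ℂ | t < max (-Real.log (‖z - a‖)) 0}
                ≤ ENNReal.ofReal (Real.exp (-t)) ^ 2 * NNReal.pi := by
            intro t ht
            calc (volume.restrict (closedBall (0:ℂ) 1))
                  {z : ℂ | t < max (-Real.log (‖z - a‖)) 0}
                ≤ volume {z : ℂ | t < max (-Real.log (‖z - a‖)) 0} :=
                  Measure.restrict_le_self _
              _ ≤ volume (ball a (Real.exp (-t))) := by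
                  apply measure_mono
                  intro z hzt
                  simp only [mem_setOf_eq] at hzt
                  have ht' : (0:ℝ) < t := ht
                  have hlog : t < -Real.log (‖z - a‖) := by
                    rcases max_cases (-Real.log (‖z - a‖)) 0 with ⟨he, _⟩ | ⟨he, _⟩
                    · rwa [he] at hzt
                    · rw [he] at hzt; linarith
                  rw [mem_ball, Complex.dist_eq]
                  rcases eq_or_lt_of_le (norm_nonneg (z - a)) with h0 | h0
                  · rw [← h0]; positivity
                  · exact (Real.log_lt_iff_lt_exp h0).1 (by linarith)
              _ = ENNReal.ofReal (Real.exp (-t)) ^ 2 * NNReal.pi := Complex.volume_ball _ _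
          calc ∫⁻ t in Ioi (0:ℝ), (volume.restrict (closedBall (0:ℂ) 1))
                {z : ℂ | t < max (-Real.log (‖z - a‖)) 0}
              ≤ ∫⁻ t in Ioi (0:ℝ), ENNReal.ofReal (Real.exp (-t)) ^ 2 * NNReal.pi := by
                apply setLIntegral_mono' measurableSet_Ioi hsub
            _ = NNReal.pi * ∫⁻ t in Ioi (0:ℝ), ENNReal.ofReal (Real.exp (-2 * t)) := by
                rw [← lintegral_const_mul' _ _ ENNReal.coe_ne_top]
                congr 1
                ext t
                rw [← ENNReal.ofReal_pow (Real.exp_pos _).le, mul_comm]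
                congr 2
                rw [← Real.exp_nat_mul]
                ring_nf
            _ < ⊤ := by
                apply ENNReal.mul_lt_top ENNReal.coe_lt_top
                have hint : IntegrableOn (fun t : ℝ => Real.exp (-2 * t)) (Ioi 0) :=
                  exp_neg_integrableOn_Ioi 0 two_pos
                have := hint.2
                rw [HasFiniteIntegral] at this
                refine lt_of_le_of_lt (lintegral_mono fun t => ?_) this
                rw [Real.enorm_eq_ofReal (Real.exp_pos _).le]
        · rw [lintegral_const, Measure.restrict_apply_univ]
          exact ENNReal.mul_lt_top ENNReal.ofReal_lt_top
            (measure_closedBall_lt_top)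

lemma polar_transform (a : ℂ) :
    ∫ z in closedBall (0:ℂ) 1, Real.log (‖z - a‖)
      = ∫ r in (0:ℝ)..1, 2*π*(r * Real.log (max r (‖a‖))) := by
  set m := ‖a‖ with hm
  set g : ℝ × ℝ → ℝ := fun q => Real.log (‖q.1 + q.2*Complex.I - a‖) with hg
  set T : Set (ℝ × ℝ) := {q | ‖q.1 + q.2*Complex.I‖ ≤ 1} with hT
  set Sset : Set (ℝ × ℝ) := Ioc (0:ℝ) 1 ×ˢ Ioo (-π) π with hS
  have hfq : ∀ q : ℝ × ℝ, Complex.measurableEquivRealProd.symm q = q.1 + q.2*Complex.I := by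
    intro q
    rw [Complex.measurableEquivRealProd_symm_apply]
    simp [Complex.ext_iff]
  have hpre : Complex.measurableEquivRealProd.symm ⁻¹' (closedBall (0:ℂ) 1) = T := by
    ext q
    simp only [mem_preimage, mem_closedBall, Complex.dist_eq, sub_zero, hfq q, hT, mem_setOf_eq]
  have hTmeas : MeasurableSet T := by
    apply IsClosed.measurableSet
    apply isClosed_le _ continuous_const
    exact continuous_norm.comp (by continuity)
  -- step 1
  have step1 : ∫ z in closedBall (0:ℂ) 1, Real.log (‖z - a‖) = ∫ q in T, g q := by
    rw [← (Complex.volume_preserving_equiv_real_prod.symm).setIntegral_preimage_emb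
      Complex.measurableEquivRealProd.symm.measurableEmbedding
      (fun z => Real.log (‖z - a‖)) (closedBall 0 1), hpre]
    exact setIntegral_congr_fun hTmeas (fun q _ => by rw [hfq q])
  -- image of the rectangle
  have hsymm : ∀ p : ℝ × ℝ,
      (polarCoord.symm p).1 + (polarCoord.symm p).2 * Complex.I = Complex.polarCoord.symm p := by
    intro p
    rw [Complex.polarCoord_symm_apply]
    simp [polarCoord]
    push_cast
    ring
  have himg : (⇑polarCoord.symm) '' Sset = polarCoord.source ∩ T := by
    ext q
    constructor
    · rintro ⟨p, hp, rfl⟩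
      have hp1 : 0 < p.1 := hp.1.1
      have hpt : p ∈ polarCoord.target := by
        rw [polarCoord_target]
        exact ⟨hp.1.1, hp.2⟩
      refine ⟨polarCoord.map_target hpt, ?_⟩
      rw [hT, mem_setOf_eq, hsymm p, Complex.norm_polarCoord_symm, abs_of_pos hp1]
      exact hp.1.2
    · rintro ⟨hq, hq1⟩
      refine ⟨polarCoord q, ?_, polarCoord.left_inv hq⟩
      have hqt := polarCoord.map_source hq
      rw [polarCoord_target] at hqt
      refine ⟨⟨hqt.1, ?_⟩, hqt.2⟩
      have : (polarCoord q).1 = ‖q.1 + q.2*Complex.I‖ := by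
        rw [Complex.norm_def, Complex.normSq_add_mul_I]
        rfl
      rw [this]
      exact hq1
  have himg2 : (⇑polarCoord.symm) '' Sset =ᵐ[volume] T := by
    rw [himg]
    have h1 : (polarCoord.source ∩ T : Set (ℝ×ℝ)) =ᵐ[volume] ((univ ∩ T : Set (ℝ×ℝ))) :=
      ae_eq_set_inter polarCoord_source_ae_eq_univ (ae_eq_refl T)
    rw [univ_inter] at h1
    exact h1
  -- Jacobian setup
  set B : ℝ × ℝ → ℝ × ℝ →L[ℝ] ℝ × ℝ := fun p =>
    LinearMap.toContinuousLinearMap (Matrix.toLin (Module.Basis.finTwoProd ℝ) (Module.Basis.finTwoProd ℝ)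
      !![cos p.2, -p.1 * sin p.2; sin p.2, p.1 * cos p.2]) with hB
  have hder : ∀ p ∈ Sset, HasFDerivWithinAt (⇑polarCoord.symm) (B p) Sset p := fun p _ =>
    (hasFDerivAt_polarCoord_symm p).hasFDerivWithinAt
  have hBdet : ∀ p : ℝ × ℝ, (B p).det = p.1 := by
    intro p
    conv_rhs => rw [← one_mul p.1, ← cos_sq_add_sin_sq p.2]
    simp only [hB, neg_mul, LinearMap.det_toContinuousLinearMap, LinearMap.det_toLin,
      Matrix.det_fin_two_of, sub_neg_eq_add]
    ring
  have hSmeas : MeasurableSet Sset := measurableSet_Ioc.prod measurableSet_Ioo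
  have hinj : InjOn (⇑polarCoord.symm) Sset := by
    apply polarCoord.symm.injOn.mono
    intro p hp
    show p ∈ polarCoord.target
    rw [polarCoord_target]
    exact ⟨hp.1.1, hp.2⟩
  -- integrability
  have hIT : IntegrableOn g T := by
    have h1 := integrableOn_log_abs a
    have h2 := ((Complex.volume_preserving_equiv_real_prod.symm).integrableOn_comp_preimage
      Complex.measurableEquivRealProd.symm.measurableEmbedding
      (f := fun z => Real.log (‖z - a‖)) (s := closedBall 0 1)).2 h1
    rw [hpre] at h2
    exact IntegrableOn.congr_fun h2 (fun q _ => by simp only [Function.comp_apply]; rw [hfq q])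
      hTmeas
  have hIimg : IntegrableOn g ((⇑polarCoord.symm) '' Sset) := by
    apply hIT.mono_set
    rw [himg]
    exact inter_subset_right
  have hIF0 := (integrableOn_image_iff_integrableOn_abs_det_fderiv_smul
    volume hSmeas hder hinj g).1 hIimg
  set F : ℝ × ℝ → ℝ := fun p => p.1 * g (polarCoord.symm p) with hF
  have hcongrF : ∀ p ∈ Sset, |(B p).det| • g (polarCoord.symm p) = F p := by
    intro p hp
    rw [hBdet p, abs_of_pos hp.1.1, smul_eq_mul]
  have hIF : IntegrableOn F Sset :=
    (hIF0.congr_fun hcongrF hSmeas)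
  -- integral equality via Jacobian
  have step4 : ∫ q in (⇑polarCoord.symm) '' Sset, g q = ∫ p in Sset, F p := by
    rw [integral_image_eq_integral_abs_det_fderiv_smul volume hSmeas hder hinj g]
    exact setIntegral_congr_fun hSmeas hcongrF
  -- Fubini
  have step5 : ∫ p in Sset, F p = ∫ r in Ioc (0:ℝ) 1, ∫ θ in Ioo (-π) π, F (r, θ) := by
    rw [hS]
    rw [show (volume : Measure (ℝ × ℝ)) = (volume : Measure ℝ).prod volume from
      Measure.volume_eq_prod ℝ ℝ]
    apply setIntegral_prod
    rw [← Measure.volume_eq_prod ℝ ℝ]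
    exact hIF
  -- inner integral
  have hinner : ∀ r, r ∈ Ioc (0:ℝ) 1 → r ≠ m →
      (∫ θ in Ioo (-π) π, F (r, θ)) = 2*π*(r * Real.log (max r m)) := by
    intro r hr hrm
    have hr0 : 0 < r := hr.1
    have hFc : ∀ θ : ℝ, F (r, θ) = r * Real.log (‖circleMap 0 r θ - a‖) := by
      intro θ
      rw [hF]
      simp only [hg]
      congr 3
      rw [hsymm (r, θ), Complex.polarCoord_symm_apply, circleMap, Complex.exp_mul_I]
      push_cast
      ring
    calc (∫ θ in Ioo (-π) π, F (r, θ))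
        = ∫ θ in Ioo (-π) π, r * Real.log (‖circleMap 0 r θ - a‖) := by
          simp_rw [hFc]
      _ = r * ∫ θ in Ioo (-π) π, Real.log (‖circleMap 0 r θ - a‖) :=
          integral_const_mul r _
      _ = r * ∫ θ in (-π)..π, Real.log (‖circleMap 0 r θ - a‖) := by
          rw [intervalIntegral.integral_of_le (by linarith [pi_pos]),
            integral_Ioc_eq_integral_Ioo]
      _ = r * ∫ θ in (0:ℝ)..(2*π), Real.log (‖circleMap 0 r θ - a‖) := by
          have hper : Function.Periodic
              (fun θ : ℝ => Real.log (‖circleMap 0 r θ - a‖)) (2*π) := by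
            intro θ
            simp only [(periodic_circleMap 0 r) θ]
          have h2 := hper.intervalIntegral_add_eq (-π) 0
          rw [show -π + 2*π = π by ring, zero_add] at h2
          rw [h2]
      _ = r * (2*π * Real.log (max r m)) := by rw [circle_log hr0 hrm]
      _ = 2*π*(r * Real.log (max r m)) := by ring
  have hae : ∀ᵐ r : ℝ, r ∈ Ioc (0:ℝ) 1 →
      (∫ θ in Ioo (-π) π, F (r, θ)) = 2*π*(r * Real.log (max r m)) := by
    have hm0 : ∀ᵐ r : ℝ, r ≠ m := by
      rw [ae_iff]
      simp only [ne_eq, not_not, setOf_eq_eq_singleton]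
      exact measure_singleton m
    filter_upwards [hm0] with r hrm hr
    exact hinner r hr hrm
  rw [step1, ← setIntegral_congr_set himg2, step4, step5,
    setIntegral_congr_ae measurableSet_Ioc hae,
    intervalIntegral.integral_of_le zero_le_one]

lemma rlogint {m : ℝ} (hm0 : 0 ≤ m) (hm1 : m ≤ 1) :
    ∫ r in m..1, 2*π*(r * Real.log r)
      = 2*π*(-(1:ℝ)/4 - (m^2*Real.log m/2 - m^2/4)) := by
  set F : ℝ → ℝ := fun r => 2*π*(r^2*Real.log r/2 - r^2/4) with hF
  have hcont : ContinuousOn F (Icc m 1) := by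
    apply Continuous.continuousOn
    have h1 : Continuous fun r : ℝ => r^2*Real.log r := by
      have := Real.continuous_mul_log.mul continuous_id
      convert this using 1
      ext r
      simp [id]
      ring
    fun_prop
  have hderiv : ∀ x ∈ Ioo m 1, HasDerivWithinAt F (2*π*(x * Real.log x)) (Ioi x) x := by
    intro x hx
    have hx0 : 0 < x := lt_of_le_of_lt hm0 hx.1
    have hd1 : HasDerivAt (fun r : ℝ => r^2 * Real.log r) (2*x*Real.log x + x) x := by
      have h := (hasDerivAt_pow 2 x).mul (Real.hasDerivAt_log hx0.ne')
      convert h using 1 <;> try rfl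
      field_simp
      ring
    have hd2 : HasDerivAt F (2*π*((2*x*Real.log x + x)/2 - (2:ℕ)*x^(2-1)/4)) x := by
      apply HasDerivAt.const_mul
      exact ((hd1.div_const 2).sub ((hasDerivAt_pow 2 x).div_const 4))
    apply HasDerivAt.hasDerivWithinAt
    convert hd2 using 1 <;> try rfl
    push_cast
    ring
  have hint : IntervalIntegrable (fun r : ℝ => 2*π*(r * Real.log r)) volume m 1 :=
    (continuous_const.mul Real.continuous_mul_log).intervalIntegrable m 1
  have := intervalIntegral.integral_eq_sub_of_hasDeriv_right_of_le hm1 hcont hderiv hint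
  rw [this, hF]
  norm_num
  ring

lemma radial_gt {m : ℝ} (hm1 : 1 < m) :
    ∫ r in (0:ℝ)..1, 2*π*(r * Real.log (max r m)) = π * Real.log m := by
  rw [intervalIntegral.integral_congr (g := fun r => (2*π*Real.log m) * r)
    (fun r hr => by
      rw [uIcc_of_le zero_le_one] at hr
      rw [max_eq_right (le_trans hr.2 hm1.le)]
      ring)]
  rw [intervalIntegral.integral_const_mul, integral_id]
  norm_num
  ring

lemma radial_le {m : ℝ} (hm0 : 0 ≤ m) (hm1 : m ≤ 1) :
    ∫ r in (0:ℝ)..1, 2*π*(r * Real.log (max r m)) = π * (m^2 - 1) / 2 := by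
  rcases eq_or_lt_of_le hm0 with h0 | h0
  · -- m = 0
    rw [intervalIntegral.integral_congr (g := fun r => 2*π*(r * Real.log r))
      (fun r hr => by
        rw [uIcc_of_le zero_le_one] at hr
        rw [← h0, max_eq_left hr.1])]
    rw [rlogint le_rfl zero_le_one]
    rw [← h0]
    norm_num
    ring
  · -- 0 < m
    have hcont : Continuous fun r : ℝ => 2*π*(r * Real.log (max r m)) := by
      apply continuous_const.mul
      apply continuous_id.mul
      apply Continuous.log
      · exact continuous_id.max continuous_const
      · intro r
        have : 0 < max r m := lt_max_of_lt_right h0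
        exact this.ne'
    have hsplit := intervalIntegral.integral_add_adjacent_intervals
      (a := (0:ℝ)) (b := m) (c := 1)
      ((hcont.intervalIntegrable 0 m : IntervalIntegrable _ volume _ _))
      ((hcont.intervalIntegrable m 1 : IntervalIntegrable _ volume _ _))
    have h1 : ∫ r in (0:ℝ)..m, 2*π*(r * Real.log (max r m)) = π * m^2 * Real.log m := by
      rw [intervalIntegral.integral_congr (g := fun r => (2*π*Real.log m) * r)
        (fun r hr => by
          rw [uIcc_of_le hm0] at hr
          rw [max_eq_right hr.2]
          ring)]
      rw [intervalIntegral.integral_const_mul, integral_id]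
      ring
    have h2 : ∫ r in m..1, 2*π*(r * Real.log (max r m))
        = 2*π*(-(1:ℝ)/4 - (m^2*Real.log m/2 - m^2/4)) := by
      rw [intervalIntegral.integral_congr (g := fun r => 2*π*(r * Real.log r))
        (fun r hr => by
          rw [uIcc_of_le hm1] at hr
          rw [max_eq_left hr.1])]
      exact rlogint hm0 hm1
    rw [← hsplit, h1, h2]
    ring

/-- Potential of the uniformly charged unit disk:
−(1/2π)∫_D ln‖x − x₀‖ dx = 1/4 − ‖x₀‖²/4 for ‖x₀‖ ≤ 1, and −(1/2)ln‖x₀‖ for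
‖x₀‖ > 1. -/
theorem disk_log_potential (x₀ : EuclideanSpace ℝ (Fin 2)) :
    (‖x₀‖ ≤ 1 →
      -(1 / (2 * π)) * ∫ x in Metric.closedBall (0 : EuclideanSpace ℝ (Fin 2)) 1,
          Real.log ‖x - x₀‖ = 1 / 4 - ‖x₀‖ ^ 2 / 4) ∧
    (1 < ‖x₀‖ →
      -(1 / (2 * π)) * ∫ x in Metric.closedBall (0 : EuclideanSpace ℝ (Fin 2)) 1,
          Real.log ‖x - x₀‖ = -(1 / 2) * Real.log ‖x₀‖) := by
  set e := Complex.orthonormalBasisOneI.repr with he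
  set a : ℂ := e.symm x₀ with ha
  have hax : e a = x₀ := by rw [ha]; simp
  have hnorm : ‖x₀‖ = ‖a‖ := by
    rw [← hax, e.norm_map]
  have hkey : ∫ x in Metric.closedBall (0 : EuclideanSpace ℝ (Fin 2)) 1, Real.log ‖x - x₀‖
      = ∫ z in closedBall (0:ℂ) 1, Real.log (‖z - a‖) := by
    have hmp : MeasurePreserving (⇑e) volume volume :=
      Complex.orthonormalBasisOneI.measurePreserving_repr
    have hemb : MeasurableEmbedding (⇑e) :=
      e.toHomeomorph.measurableEmbedding
    rw [← hmp.setIntegral_preimage_emb hemb (fun x => Real.log ‖x - x₀‖)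
      (Metric.closedBall 0 1)]
    have hpre : (⇑e) ⁻¹' (Metric.closedBall (0 : EuclideanSpace ℝ (Fin 2)) 1)
        = closedBall (0:ℂ) 1 := by
      ext z
      simp only [mem_preimage, Metric.mem_closedBall, dist_zero_right, e.norm_map]
    rw [hpre]
    apply setIntegral_congr_fun measurableSet_closedBall
    intro z _
    show Real.log ‖e z - x₀‖ = Real.log (‖z - a‖)
    have h3 : e z - x₀ = e (z - a) := by rw [map_sub, hax]
    rw [h3, e.norm_map]
  constructor
  · intro h
    rw [hkey, polar_transform a, radial_le (norm_nonneg a) (hnorm ▸ h), hnorm]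
    have hπ : π ≠ 0 := pi_ne_zero
    field_simp
    ring
  · intro h
    rw [hkey, polar_transform a, radial_gt (hnorm ▸ h), hnorm]
    have hπ : π ≠ 0 := pi_ne_zero
    field_simp
end
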